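/- Suppose a map π̂: R^d → R^m satisfies: (a) for every subset S ⊆ P there is a q-flat F with (Σ_{p∈S} d(p,F)^ρ)^{1/ρ} ≤ (1+ε/2)·f_1^q(S,ρ) and (1±ε/3)-preservation of point-to-F distances under π̂; and (b) symmetrically for subsets of π̂(P). Then for all S ⊆ P, (1-ε)·f_1^q(S,ρ) ≤ f_1^q(π̂(S),ρ) ≤ (1+ε)·f_1^q(S,ρ). -/
import Mathlib

open Finset in
/-- `f1 q ρ S`: the minimal `L_ρ` cost of fitting a single `q`-dimensional affine flat to `S`. -/
noncomputable def f1 {V : Type*} [NormedAddCommGroup V] [InnerProductSpace ℝ V]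
    (q : ℕ) (ρ : ℝ) (S : Finset V) : ℝ :=
  sInf {y : ℝ | ∃ F : AffineSubspace ℝ V, (F : Set V).Nonempty ∧
    Module.finrank ℝ F.direction = q ∧
    y = (∑ p ∈ S, Metric.infDist p (F : Set V) ^ ρ) ^ (1/ρ)}

open Finset in
theorem my_sum_image_le {α β : Type*} [DecidableEq β] (S : Finset α) (f : α → β) (g : β → ℝ)
    (hg : ∀ y, 0 ≤ g y) : ∑ y ∈ S.image f, g y ≤ ∑ x ∈ S, g (f x) := by
  classical
  induction S using Finset.induction with
  | empty => simp
  | @insert a s ha ih =>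
    rw [Finset.image_insert, Finset.sum_insert ha]
    by_cases h : f a ∈ s.image f
    · rw [Finset.insert_eq_self.mpr h]; linarith [hg (f a)]
    · rw [Finset.sum_insert h]; linarith

theorem my_rpow_scale (ρ : ℝ) (hρ : 1 ≤ ρ) {c X : ℝ} (hc : 0 ≤ c) (hX : 0 ≤ X) :
    (c ^ ρ * X) ^ (1/ρ) = c * X ^ (1/ρ) := by
  have hρ0 : ρ ≠ 0 := by linarith
  rw [Real.mul_rpow (Real.rpow_nonneg hc _) hX, ← Real.rpow_mul hc,
    mul_one_div_cancel hρ0, Real.rpow_one]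

open Finset in
/-- Scaled ℓ_ρ comparison: pointwise `c₁ * a p ≤ c₂ * b p` gives
`c₁ * (∑ a^ρ)^(1/ρ) ≤ c₂ * (∑ b^ρ)^(1/ρ)`. -/
theorem my_lp_compare {α : Type*} (ρ : ℝ) (hρ : 1 ≤ ρ) (S : Finset α)
    (a b : α → ℝ) (ha : ∀ p ∈ S, 0 ≤ a p) (hb : ∀ p ∈ S, 0 ≤ b p)
    {c₁ c₂ : ℝ} (hc₁ : 0 ≤ c₁) (hc₂ : 0 ≤ c₂)
    (h : ∀ p ∈ S, c₁ * a p ≤ c₂ * b p) :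
    c₁ * (∑ p ∈ S, a p ^ ρ) ^ (1/ρ) ≤ c₂ * (∑ p ∈ S, b p ^ ρ) ^ (1/ρ) := by
  have hρ0 : (0:ℝ) ≤ ρ := by linarith
  have hsum : c₁ ^ ρ * ∑ p ∈ S, a p ^ ρ ≤ c₂ ^ ρ * ∑ p ∈ S, b p ^ ρ := by
    rw [Finset.mul_sum, Finset.mul_sum]
    refine Finset.sum_le_sum fun p hp => ?_
    rw [← Real.mul_rpow hc₁ (ha p hp), ← Real.mul_rpow hc₂ (hb p hp)]
    exact Real.rpow_le_rpow (mul_nonneg hc₁ (ha p hp)) (h p hp) hρ0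
  have hA : (0:ℝ) ≤ ∑ p ∈ S, a p ^ ρ :=
    Finset.sum_nonneg fun p hp => Real.rpow_nonneg (ha p hp) _
  have hB : (0:ℝ) ≤ ∑ p ∈ S, b p ^ ρ :=
    Finset.sum_nonneg fun p hp => Real.rpow_nonneg (hb p hp) _
  calc c₁ * (∑ p ∈ S, a p ^ ρ) ^ (1/ρ) = (c₁ ^ ρ * ∑ p ∈ S, a p ^ ρ) ^ (1/ρ) :=
        (my_rpow_scale ρ hρ hc₁ hA).symm
    _ ≤ (c₂ ^ ρ * ∑ p ∈ S, b p ^ ρ) ^ (1/ρ) :=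
        Real.rpow_le_rpow (mul_nonneg (Real.rpow_nonneg hc₁ _) hA) hsum
          (by positivity)
    _ = c₂ * (∑ p ∈ S, b p ^ ρ) ^ (1/ρ) := my_rpow_scale ρ hρ hc₂ hB

theorem f1_bddBelow {V : Type*} [NormedAddCommGroup V] [InnerProductSpace ℝ V]
    (q : ℕ) (ρ : ℝ) (S : Finset V) :
    BddBelow {y : ℝ | ∃ F : AffineSubspace ℝ V, (F : Set V).Nonempty ∧
      Module.finrank ℝ F.direction = q ∧
      y = (∑ p ∈ S, Metric.infDist p (F : Set V) ^ ρ) ^ (1/ρ)} := by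
  refine ⟨0, ?_⟩
  rintro y ⟨F, -, -, rfl⟩
  exact Real.rpow_nonneg
    (Finset.sum_nonneg fun p _ => Real.rpow_nonneg Metric.infDist_nonneg _) _

theorem f1_nonneg {V : Type*} [NormedAddCommGroup V] [InnerProductSpace ℝ V]
    (q : ℕ) (ρ : ℝ) (S : Finset V) : 0 ≤ f1 q ρ S := by
  refine Real.sInf_nonneg fun y hy => ?_
  obtain ⟨F, -, -, rfl⟩ := hy
  exact Real.rpow_nonneg
    (Finset.sum_nonneg fun p _ => Real.rpow_nonneg Metric.infDist_nonneg _) _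

theorem f1_le {V : Type*} [NormedAddCommGroup V] [InnerProductSpace ℝ V]
    (q : ℕ) (ρ : ℝ) (S : Finset V) (F : AffineSubspace ℝ V)
    (hne : (F : Set V).Nonempty) (hq : Module.finrank ℝ F.direction = q) :
    f1 q ρ S ≤ (∑ p ∈ S, Metric.infDist p (F : Set V) ^ ρ) ^ (1/ρ) :=
  csInf_le (f1_bddBelow q ρ S) ⟨F, hne, hq, rfl⟩

open Finset in
theorem single_flat_cost_preserved (d m q : ℕ) (ρ : ℝ) (hρ : 1 ≤ ρ)
    (ε : ℝ) (hε0 : 0 < ε) (hε1 : ε < 1)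
    [DecidableEq (EuclideanSpace ℝ (Fin m))]
    (π : EuclideanSpace ℝ (Fin d) →ₗ[ℝ] EuclideanSpace ℝ (Fin m))
    (P : Finset (EuclideanSpace ℝ (Fin d)))
    (ha : ∀ S ⊆ P, ∃ F : AffineSubspace ℝ (EuclideanSpace ℝ (Fin d)),
      (F : Set (EuclideanSpace ℝ (Fin d))).Nonempty ∧
      Module.finrank ℝ F.direction = q ∧
      Module.finrank ℝ (F.map π.toAffineMap).direction = q ∧
      (∑ p ∈ S, Metric.infDist p (F : Set (EuclideanSpace ℝ (Fin d))) ^ ρ) ^ (1/ρ)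
        ≤ (1 + ε/2) * f1 q ρ S ∧
      ∀ p ∈ S,
        (1 - ε/3) * Metric.infDist p (F : Set (EuclideanSpace ℝ (Fin d)))
          ≤ Metric.infDist (π p) ((F.map π.toAffineMap : AffineSubspace ℝ
              (EuclideanSpace ℝ (Fin m))) : Set (EuclideanSpace ℝ (Fin m))) ∧
        Metric.infDist (π p) ((F.map π.toAffineMap : AffineSubspace ℝ
              (EuclideanSpace ℝ (Fin m))) : Set (EuclideanSpace ℝ (Fin m)))
          ≤ (1 + ε/3) * Metric.infDist p (F : Set (EuclideanSpace ℝ (Fin d))))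
    (hb : ∀ S ⊆ P, ∃ F' : AffineSubspace ℝ (EuclideanSpace ℝ (Fin d)),
      (F' : Set (EuclideanSpace ℝ (Fin d))).Nonempty ∧
      Module.finrank ℝ F'.direction = q ∧
      Module.finrank ℝ (F'.map π.toAffineMap).direction = q ∧
      (∑ p ∈ S, Metric.infDist (π p) ((F'.map π.toAffineMap : AffineSubspace ℝ
              (EuclideanSpace ℝ (Fin m))) : Set (EuclideanSpace ℝ (Fin m))) ^ ρ) ^ (1/ρ)
        ≤ (1 + ε/2) * f1 q ρ (S.image π) ∧
      ∀ p ∈ S,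
        (1 - ε/3) * Metric.infDist p (F' : Set (EuclideanSpace ℝ (Fin d)))
          ≤ Metric.infDist (π p) ((F'.map π.toAffineMap : AffineSubspace ℝ
              (EuclideanSpace ℝ (Fin m))) : Set (EuclideanSpace ℝ (Fin m))) ∧
        Metric.infDist (π p) ((F'.map π.toAffineMap : AffineSubspace ℝ
              (EuclideanSpace ℝ (Fin m))) : Set (EuclideanSpace ℝ (Fin m)))
          ≤ (1 + ε/3) * Metric.infDist p (F' : Set (EuclideanSpace ℝ (Fin d)))) :
    ∀ S ⊆ P, (1 - ε) * f1 q ρ S ≤ f1 q ρ (S.image π) ∧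
      f1 q ρ (S.image π) ≤ (1 + ε) * f1 q ρ S := by
  intro S hS
  have hfS := f1_nonneg q ρ S
  have hfT := f1_nonneg q ρ (S.image π)
  constructor
  · -- lower bound, uses (b)
    obtain ⟨F', hne, hq', hqm, hcost, hdist⟩ := hb S hS
    have hmapne : ((F'.map π.toAffineMap : AffineSubspace ℝ
        (EuclideanSpace ℝ (Fin m))) : Set (EuclideanSpace ℝ (Fin m))).Nonempty := by
      rw [AffineSubspace.coe_map]; exact hne.image _
    have hA : f1 q ρ S ≤
        (∑ p ∈ S, Metric.infDist p (F' : Set (EuclideanSpace ℝ (Fin d))) ^ ρ) ^ (1/ρ) :=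
      f1_le q ρ S F' hne hq'
    have hAB : (1 - ε/3) *
        (∑ p ∈ S, Metric.infDist p (F' : Set (EuclideanSpace ℝ (Fin d))) ^ ρ) ^ (1/ρ)
        ≤ 1 * (∑ p ∈ S, Metric.infDist (π p) ((F'.map π.toAffineMap : AffineSubspace ℝ
            (EuclideanSpace ℝ (Fin m))) : Set (EuclideanSpace ℝ (Fin m))) ^ ρ) ^ (1/ρ) := by
      refine my_lp_compare ρ hρ S _ _ (fun p _ => Metric.infDist_nonneg)
        (fun p _ => Metric.infDist_nonneg) (by linarith) zero_le_one fun p hp => ?_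
      rw [one_mul]; exact (hdist p hp).1
    rw [one_mul] at hAB
    have hApos : (0:ℝ) ≤
        (∑ p ∈ S, Metric.infDist p (F' : Set (EuclideanSpace ℝ (Fin d))) ^ ρ) ^ (1/ρ) :=
      Real.rpow_nonneg
        (Finset.sum_nonneg fun p _ => Real.rpow_nonneg Metric.infDist_nonneg _) _
    have key : (1 - ε/3) *
        (∑ p ∈ S, Metric.infDist p (F' : Set (EuclideanSpace ℝ (Fin d))) ^ ρ) ^ (1/ρ)
        ≤ (1 + ε/2) * f1 q ρ (S.image π) := le_trans hAB hcost
    have h1ε : (0:ℝ) ≤ 1 - ε := by linarith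
    have hgoal : (1 - ε) *
        (∑ p ∈ S, Metric.infDist p (F' : Set (EuclideanSpace ℝ (Fin d))) ^ ρ) ^ (1/ρ)
        ≤ f1 q ρ (S.image π) := by
      nlinarith [mul_le_mul_of_nonneg_left key h1ε, mul_nonneg hfT hε0.le,
        mul_nonneg (mul_nonneg hfT hε0.le) hε0.le, mul_nonneg hApos hε0.le,
        mul_nonneg (mul_nonneg hApos hε0.le) hε0.le]
    calc (1 - ε) * f1 q ρ S ≤ (1 - ε) *
          (∑ p ∈ S, Metric.infDist p (F' : Set (EuclideanSpace ℝ (Fin d))) ^ ρ) ^ (1/ρ) :=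
        mul_le_mul_of_nonneg_left hA h1ε
      _ ≤ f1 q ρ (S.image π) := hgoal
  · -- upper bound, uses (a)
    obtain ⟨F, hne, hq', hqm, hcost, hdist⟩ := ha S hS
    have hmapne : ((F.map π.toAffineMap : AffineSubspace ℝ
        (EuclideanSpace ℝ (Fin m))) : Set (EuclideanSpace ℝ (Fin m))).Nonempty := by
      rw [AffineSubspace.coe_map]; exact hne.image _
    have h1 : f1 q ρ (S.image π) ≤
        (∑ y ∈ S.image π, Metric.infDist y ((F.map π.toAffineMap : AffineSubspace ℝ
            (EuclideanSpace ℝ (Fin m))) : Set (EuclideanSpace ℝ (Fin m))) ^ ρ) ^ (1/ρ) :=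
      f1_le q ρ (S.image π) (F.map π.toAffineMap) hmapne hqm
    have h2 : (∑ y ∈ S.image π, Metric.infDist y ((F.map π.toAffineMap : AffineSubspace ℝ
            (EuclideanSpace ℝ (Fin m))) : Set (EuclideanSpace ℝ (Fin m))) ^ ρ) ^ (1/ρ)
        ≤ (∑ p ∈ S, Metric.infDist (π p) ((F.map π.toAffineMap : AffineSubspace ℝ
            (EuclideanSpace ℝ (Fin m))) : Set (EuclideanSpace ℝ (Fin m))) ^ ρ) ^ (1/ρ) := by
      refine Real.rpow_le_rpow
        (Finset.sum_nonneg fun p _ => Real.rpow_nonneg Metric.infDist_nonneg _)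
        (my_sum_image_le S π _ fun y => Real.rpow_nonneg Metric.infDist_nonneg _)
        (by positivity)
    have h3 : 1 * (∑ p ∈ S, Metric.infDist (π p) ((F.map π.toAffineMap : AffineSubspace ℝ
            (EuclideanSpace ℝ (Fin m))) : Set (EuclideanSpace ℝ (Fin m))) ^ ρ) ^ (1/ρ)
        ≤ (1 + ε/3) *
          (∑ p ∈ S, Metric.infDist p (F : Set (EuclideanSpace ℝ (Fin d))) ^ ρ) ^ (1/ρ) := by
      refine my_lp_compare ρ hρ S _ _ (fun p _ => Metric.infDist_nonneg)
        (fun p _ => Metric.infDist_nonneg) zero_le_one (by linarith) fun p hp => ?_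
      rw [one_mul]; exact (hdist p hp).2
    rw [one_mul] at h3
    have h4 : (1 + ε/3) *
        (∑ p ∈ S, Metric.infDist p (F : Set (EuclideanSpace ℝ (Fin d))) ^ ρ) ^ (1/ρ)
        ≤ (1 + ε/3) * ((1 + ε/2) * f1 q ρ S) :=
      mul_le_mul_of_nonneg_left hcost (by linarith)
    have h5 : (1 + ε/3) * ((1 + ε/2) * f1 q ρ S) ≤ (1 + ε) * f1 q ρ S := by
      nlinarith [mul_nonneg hfS hε0.le, mul_nonneg (mul_nonneg hfS hε0.le) hε0.le,
        mul_nonneg (mul_nonneg hfS hε0.le) (by linarith : (0:ℝ) ≤ 1 - ε)]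
    linarith
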